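/- Under dichotomous valuations, suppose (A, p) is an envy-free solution with p ∈ {0,1}^n, and for the allocation C obtained by adding an unallocated good g to the bundle of an agent κ with q_κ = 1 and v_κ(A_κ ∪ {g}) − v_κ(A_κ) = 1, define subsidies q̂ by q̂_κ = 0 and q̂_i = p_i for i ≠ κ. Then (C, q̂) is an envy-free solution. -/
import Mathlib


/-- Under dichotomous valuations, suppose `(A, p)` is an envy-free
solution with `p ∈ {0,1}^n`, agent `κ` has subsidy `p κ = 1` and marginal value
`1` for an unallocated good `g` relative to `A κ`. Let `C` be obtained by adding
`g` to `A κ`, and define subsidies `q̂` by `q̂ κ = 0` and `q̂ i = p i` otherwise.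
Then `(C, q̂)` is an envy-free solution. -/
theorem reduce_subsidy_of_extender {n m : ℕ}
    (v : Fin n → Finset (Fin m) → ℝ)
    (hempty : ∀ i, v i ∅ = 0)
    (hdich : ∀ i (S : Finset (Fin m)) (g : Fin m),
        v i (insert g S) - v i S = 0 ∨ v i (insert g S) - v i S = 1)
    (A : Fin n → Finset (Fin m))
    (hdisj : ∀ i j, i ≠ j → Disjoint (A i) (A j))
    (p : Fin n → ℝ) (hp01 : ∀ i, p i = 0 ∨ p i = 1)
    (hEF : ∀ i j, v i (A j) + p j ≤ v i (A i) + p i)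
    (g : Fin m) (hg : ∀ i, g ∉ A i)
    (κ : Fin n) (hpκ : p κ = 1)
    (hκmarg : v κ (insert g (A κ)) - v κ (A κ) = 1) :
    ∀ i j, v i (Function.update A κ (insert g (A κ)) j) + Function.update p κ 0 j ≤
      v i (Function.update A κ (insert g (A κ)) i) + Function.update p κ 0 i := by
  intro i j
  by_cases hi : i = κ <;> by_cases hj : j = κ
  · rw [hi, hj]
  · rw [hi]
    simp only [Function.update_self, Function.update_of_ne hj]
    have h1 := hEF κ j
    linarith
  · rw [hj]
    simp only [Function.update_self, Function.update_of_ne hi]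
    have h2 : v i (insert g (A κ)) - v i (A κ) ≤ 1 := by
      rcases hdich i (A κ) g with h | h <;> linarith
    have h1 := hEF i κ
    linarith
  · simp only [Function.update_of_ne hi, Function.update_of_ne hj]
    exact hEF i j
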